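/- Let f_1, f_2, ... be a family of queries on datasets that is 1-sensitive and has unidirectional sensitivity, let D, D' be neighboring datasets, let k ≥ 1, and fix real numbers ν_1, ..., ν_{k−1}. Define g(D) := max_{i<k}(f_i(D) + ν_i) (interpreted as −∞ when k = 1). Let γ and ν_k be independent Lap(2/ε) random variables and T̂ := T + γ. Then P( g(D) < T̂ ≤ f_k(D) + ν_k ) ≤ e^ε · P( g(D') < T̂ ≤ f_k(D') + ν_k ). -/

import Mathlib

open MeasureTheory Real

/-- The Laplace distribution on ℝ with location 0 and scale `b`. -/
noncomputable def laplace (b : ℝ) : Measure ℝ :=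
  volume.withDensity fun x => ENNReal.ofReal ((2 * b)⁻¹ * Real.exp (-|x| / b))

instance (b : ℝ) : SigmaFinite (laplace b) := by
  unfold laplace; infer_instance

lemma laplace_shift (b : ℝ) (hb : 0 < b) (c : ℝ) (S : Set ℝ) (hS : MeasurableSet S) :
    laplace b {x | x + c ∈ S} ≤ ENNReal.ofReal (Real.exp (|c| / b)) * laplace b S := by
  have hmeas : MeasurableSet {x : ℝ | x + c ∈ S} := hS.preimage (measurable_add_const c)
  set ρ : ℝ → ENNReal := fun x => ENNReal.ofReal ((2 * b)⁻¹ * Real.exp (-|x| / b)) with hρ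
  have hρm : Measurable ρ := by
    apply Measurable.ennreal_ofReal
    fun_prop
  have h1 : laplace b {x | x + c ∈ S} = ∫⁻ y in S, ρ (y - c) := by
    rw [laplace, withDensity_apply _ hmeas, ← lintegral_indicator hmeas _]
    have : ∀ x : ℝ, ({x : ℝ | x + c ∈ S}).indicator ρ x
        = S.indicator (fun y => ρ (y - c)) (x + c) := by
      intro x
      by_cases h : x + c ∈ S <;> simp [Set.indicator, h]
    simp_rw [← hρ, this]
    rw [lintegral_add_right_eq_self (S.indicator (fun y => ρ (y - c))) c,
      lintegral_indicator hS _]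
  have h2 : laplace b S = ∫⁻ y in S, ρ y := by
    rw [laplace, withDensity_apply _ hS]
  rw [h1, h2]
  calc ∫⁻ y in S, ρ (y - c)
      ≤ ∫⁻ y in S, ENNReal.ofReal (Real.exp (|c| / b)) * ρ y := by
        refine lintegral_mono fun y => ?_
        rw [hρ]
        simp only
        rw [← ENNReal.ofReal_mul (Real.exp_nonneg _)]
        apply ENNReal.ofReal_le_ofReal
        have hb2 : (0:ℝ) ≤ (2 * b)⁻¹ := by positivity
        have habs : |y| - |y - c| ≤ |c| := by
          have := abs_sub_abs_le_abs_sub y (y - c)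
          simpa using this
        have : Real.exp (-|y - c| / b) ≤ Real.exp (|c| / b) * Real.exp (-|y| / b) := by
          rw [← Real.exp_add, Real.exp_le_exp, ← add_div, div_le_div_iff_of_pos_right hb]
          linarith
        calc (2 * b)⁻¹ * Real.exp (-|y - c| / b)
            ≤ (2 * b)⁻¹ * (Real.exp (|c| / b) * Real.exp (-|y| / b)) := by
              exact mul_le_mul_of_nonneg_left this hb2
          _ = Real.exp (|c| / b) * ((2 * b)⁻¹ * Real.exp (-|y| / b)) := by ring
    _ = ENNReal.ofReal (Real.exp (|c| / b)) * ∫⁻ y in S, ρ y :=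
        lintegral_const_mul' _ _ ENNReal.ofReal_ne_top

lemma laplace_prod_shift (b : ℝ) (hb : 0 < b) (a c : ℝ) (S : Set (ℝ × ℝ))
    (hS : MeasurableSet S) :
    (laplace b).prod (laplace b) {p : ℝ × ℝ | (p.1 + a, p.2 + c) ∈ S} ≤
      ENNReal.ofReal (Real.exp ((|a| + |c|) / b)) * (laplace b).prod (laplace b) S := by
  set μ := laplace b
  have hA : MeasurableSet {p : ℝ × ℝ | (p.1 + a, p.2 + c) ∈ S} :=
    hS.preimage (by fun_prop)
  have hB : MeasurableSet {p : ℝ × ℝ | (p.1 + a, p.2) ∈ S} :=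
    hS.preimage (by fun_prop)
  have step1 : μ.prod μ {p : ℝ × ℝ | (p.1 + a, p.2 + c) ∈ S} ≤
      ENNReal.ofReal (Real.exp (|c| / b)) * μ.prod μ {p : ℝ × ℝ | (p.1 + a, p.2) ∈ S} := by
    rw [Measure.prod_apply hA, Measure.prod_apply hB, ← lintegral_const_mul' _ _
      ENNReal.ofReal_ne_top]
    refine lintegral_mono fun x => ?_
    have hslice : MeasurableSet {y : ℝ | (x + a, y) ∈ S} :=
      hS.preimage (by fun_prop)
    have := laplace_shift b hb c _ hslice
    simpa using this
  have step2 : μ.prod μ {p : ℝ × ℝ | (p.1 + a, p.2) ∈ S} ≤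
      ENNReal.ofReal (Real.exp (|a| / b)) * μ.prod μ S := by
    rw [Measure.prod_apply_symm hB, Measure.prod_apply_symm hS, ← lintegral_const_mul' _ _
      ENNReal.ofReal_ne_top]
    refine lintegral_mono fun y => ?_
    have hslice : MeasurableSet {x : ℝ | (x, y) ∈ S} :=
      hS.preimage (by fun_prop)
    have := laplace_shift b hb a _ hslice
    exact this
  calc μ.prod μ {p : ℝ × ℝ | (p.1 + a, p.2 + c) ∈ S}
      ≤ ENNReal.ofReal (Real.exp (|c| / b)) * μ.prod μ {p : ℝ × ℝ | (p.1 + a, p.2) ∈ S} := step1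
    _ ≤ ENNReal.ofReal (Real.exp (|c| / b)) *
        (ENNReal.ofReal (Real.exp (|a| / b)) * μ.prod μ S) :=
        mul_le_mul_right step2 _
    _ = ENNReal.ofReal (Real.exp ((|a| + |c|) / b)) * μ.prod μ S := by
        rw [← mul_assoc, ← ENNReal.ofReal_mul (Real.exp_nonneg _), ← Real.exp_add]
        ring_nf

/-- Fixing the noise values `ν_1, …, ν_{k−1}` and letting `g(D) := max_{i<k}(f_i(D) + ν_i)`
(`−∞` when `k = 1`, i.e. a vacuous condition), with `γ` and `ν_k` fresh independent
`Lap(2/ε)` samples and `T̂ := T + γ`: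
`P(g(D) < T̂ ≤ f_k(D) + ν_k) ≤ e^ε · P(g(D') < T̂ ≤ f_k(D') + ν_k)`.
The first coordinate of the sample is `γ`, the second is `ν_k`. -/
theorem stmt_9 {Dset : Type*} (Neighbor : Dset → Dset → Prop)
    (f : ℕ → Dset → ℝ)
    (hsens : ∀ d d', Neighbor d d' → ∀ i, |f i d - f i d'| ≤ 1)
    (huds : ∀ d d', Neighbor d d' → (∃ i, f i d > f i d') → ¬∃ j, f j d < f j d')
    (D D' : Dset) (hN : Neighbor D D')
    (T ε : ℝ) (hε : 0 < ε) (k : ℕ) (hk : 1 ≤ k) (ν : ℕ → ℝ) :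
    (laplace (2 / ε)).prod (laplace (2 / ε))
        {p : ℝ × ℝ | (∀ i, 1 ≤ i → i < k → f i D + ν i < T + p.1) ∧
          T + p.1 ≤ f k D + p.2} ≤
      ENNReal.ofReal (Real.exp ε) *
        (laplace (2 / ε)).prod (laplace (2 / ε))
          {p : ℝ × ℝ | (∀ i, 1 ≤ i → i < k → f i D' + ν i < T + p.1) ∧
            T + p.1 ≤ f k D' + p.2} := by
  have hb : (0:ℝ) < 2 / ε := by positivity
  set μ := laplace (2 / ε)
  set S' : Set (ℝ × ℝ) := {p : ℝ × ℝ | (∀ i, 1 ≤ i → i < k → f i D' + ν i < T + p.1) ∧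
      T + p.1 ≤ f k D' + p.2} with hS'def
  have hS' : MeasurableSet S' := by
    rw [hS'def, Set.setOf_and]
    apply MeasurableSet.inter
    · have : {p : ℝ × ℝ | ∀ i, 1 ≤ i → i < k → f i D' + ν i < T + p.1}
          = ⋂ i, ⋂ (_ : 1 ≤ i) , ⋂ (_ : i < k), {p : ℝ × ℝ | f i D' + ν i < T + p.1} := by
        ext p; simp
      rw [this]
      refine MeasurableSet.iInter fun i => MeasurableSet.iInter fun _ =>
        MeasurableSet.iInter fun _ => ?_
      exact measurableSet_lt measurable_const (measurable_const.add measurable_fst)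
    · exact measurableSet_le (measurable_const.add measurable_fst)
        (measurable_const.add measurable_snd)
  -- case split using unidirectional sensitivity
  by_cases hcase : ∃ i, f i D > f i D'
  · -- all f i D ≥ f i D' : shift (0, 1)
    have hall : ∀ i, f i D' ≤ f i D := by
      have := huds D D' hN hcase
      push_neg at this
      exact this
    have hsub : {p : ℝ × ℝ | (∀ i, 1 ≤ i → i < k → f i D + ν i < T + p.1) ∧
        T + p.1 ≤ f k D + p.2} ⊆ {p : ℝ × ℝ | (p.1 + 0, p.2 + 1) ∈ S'} := by
      rintro ⟨x, y⟩ ⟨h1, h2⟩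
      refine ⟨fun i hi1 hik => ?_, ?_⟩
      · have := h1 i hi1 hik
        have := hall i
        simp only
        linarith
      · have := hsens D D' hN k
        have h3 : f k D - f k D' ≤ 1 := (abs_le.mp this).2
        simp only
        linarith
    calc μ.prod μ _ ≤ μ.prod μ {p : ℝ × ℝ | (p.1 + 0, p.2 + 1) ∈ S'} := measure_mono hsub
      _ ≤ ENNReal.ofReal (Real.exp ((|(0:ℝ)| + |(1:ℝ)|) / (2 / ε))) * μ.prod μ S' :=
          laplace_prod_shift _ hb 0 1 S' hS'
      _ ≤ ENNReal.ofReal (Real.exp ε) * μ.prod μ S' := by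
          refine mul_le_mul_left (ENNReal.ofReal_le_ofReal (Real.exp_le_exp.mpr ?_)) _
          rw [abs_zero, abs_one, div_div_eq_mul_div]
          nlinarith
  · -- all f i D ≤ f i D' : shift (1, 1)
    push_neg at hcase
    have hsub : {p : ℝ × ℝ | (∀ i, 1 ≤ i → i < k → f i D + ν i < T + p.1) ∧
        T + p.1 ≤ f k D + p.2} ⊆ {p : ℝ × ℝ | (p.1 + 1, p.2 + 1) ∈ S'} := by
      rintro ⟨x, y⟩ ⟨h1, h2⟩
      refine ⟨fun i hi1 hik => ?_, ?_⟩
      · have := h1 i hi1 hik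
        have hs := hsens D D' hN i
        have h3 : f i D' - f i D ≤ 1 := by
          rw [abs_sub_comm] at hs
          exact (abs_le.mp hs).2
        simp only
        linarith
      · have := hcase k
        simp only
        linarith
    calc μ.prod μ _ ≤ μ.prod μ {p : ℝ × ℝ | (p.1 + 1, p.2 + 1) ∈ S'} := measure_mono hsub
      _ ≤ ENNReal.ofReal (Real.exp ((|(1:ℝ)| + |(1:ℝ)|) / (2 / ε))) * μ.prod μ S' :=
          laplace_prod_shift _ hb 1 1 S' hS'
      _ ≤ ENNReal.ofReal (Real.exp ε) * μ.prod μ S' := by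
          refine mul_le_mul_left (ENNReal.ofReal_le_ofReal (Real.exp_le_exp.mpr ?_)) _
          rw [abs_one, div_div_eq_mul_div]
          nlinarith
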